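/- Let X₁, X₂ ∈ SL(2,ℂ) with tr(X₁) = tr(X₂) = t, Y = X₂X₁⁻¹, s = tr(Y), k ∈ ℤ, β = ω_k(s), γ = ω_{k+1}(s), and A = Y^k X₂ Y^{-k} X₁. Then tr(A) = 2 - (s + 2 - t²)(γ - β)². -/

import Mathlib

open Matrix

lemma CH2' (M : Matrix (Fin 2) (Fin 2) ℂ) (h : M.det = 1) : M * M = M.trace • M - 1 := by
  rw [Matrix.det_fin_two] at h
  ext i j
  fin_cases i <;> fin_cases j <;>
    simp [Matrix.mul_apply, Fin.sum_univ_two, Matrix.trace_fin_two, Matrix.one_apply] <;>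
    first | ring1 | linear_combination h | linear_combination -h

lemma inv_coe2' (X : SpecialLinearGroup (Fin 2) ℂ) :
    ((X⁻¹ : SpecialLinearGroup (Fin 2) ℂ) : Matrix (Fin 2) (Fin 2) ℂ)
      = (X : Matrix (Fin 2) (Fin 2) ℂ).trace • 1 - X := by
  rw [Matrix.SpecialLinearGroup.coe_inv, Matrix.adjugate_fin_two]
  ext i j
  fin_cases i <;> fin_cases j <;>
    simp [Matrix.trace_fin_two, Matrix.one_apply]

lemma wpair' (s : ℂ) (w : ℤ → ℂ) (hw0 : w 0 = 0) (hw1 : w 1 = 1)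
    (hrec : ∀ j : ℤ, w (j + 1) = s * w j - w (j - 1)) :
    ∀ k : ℤ, (w (-k) = -w k ∧ w (-(k+1)) = -w (k+1)) ∧
      w (k+1)^2 + w k^2 - s * w (k+1) * w k = 1 := by
  have hdown : ∀ j : ℤ, w (j - 1) = s * w j - w (j + 1) := fun j => by
    linear_combination hrec j
  have hm1 : w (-1) = -1 := by
    have h := hdown 0
    rw [show (0:ℤ) - 1 = -1 by ring, show (0:ℤ) + 1 = 1 by ring, hw0, hw1] at h
    simpa using h
  intro k
  induction k using Int.induction_on with
  | zero =>
    refine ⟨⟨by simp [hw0], ?_⟩, by rw [show (0:ℤ)+1 = 1 by ring, hw0, hw1]; ring⟩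
    rw [show -((0:ℤ)+1) = -1 by ring, show (0:ℤ)+1 = 1 by ring, hm1, hw1]
  | succ n ih =>
    obtain ⟨⟨h1, h2⟩, h3⟩ := ih
    have e1 : w ((n:ℤ) + 1 + 1) = s * w (n + 1) - w n := by
      have := hrec ((n:ℤ)+1)
      rwa [show (n:ℤ)+1-1 = n by ring] at this
    have e2 : w (-((n:ℤ) + 1 + 1)) = s * w (-((n:ℤ)+1)) - w (-(n:ℤ)) := by
      have := hdown (-((n:ℤ)+1))
      rwa [show -((n:ℤ)+1) - 1 = -((n:ℤ)+1+1) by ring,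
        show -((n:ℤ)+1) + 1 = -(n:ℤ) by ring] at this
    refine ⟨⟨h2, ?_⟩, ?_⟩
    · rw [e2, e1, h1, h2]; ring
    · rw [e1]; linear_combination h3
  | pred n ih =>
    obtain ⟨⟨h1, h2⟩, h3⟩ := ih
    rw [show -(-(n:ℤ)) = (n:ℤ) by ring] at h1
    rw [show -(-(n:ℤ)+1) = (n:ℤ)-1 by ring] at h2
    have e1 : w (-(n:ℤ) - 1) = s * w (-(n:ℤ)) - w (-(n:ℤ) + 1) := hdown (-(n:ℤ))
    refine ⟨⟨?_, ?_⟩, ?_⟩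
    · rw [show -(-(n:ℤ)-1) = (n:ℤ)+1 by ring]
      linear_combination hrec (n:ℤ) + e1 + s*h1 - h2
    · rw [show -(-(n:ℤ)-1+1) = (n:ℤ) by ring, show -(n:ℤ)-1+1 = -(n:ℤ) by ring]
      exact h1
    · rw [show -(n:ℤ)-1+1 = -(n:ℤ) by ring, e1]
      linear_combination h3

lemma powS' (S : SpecialLinearGroup (Fin 2) ℂ) (s : ℂ)
    (hs : (S : Matrix (Fin 2) (Fin 2) ℂ).trace = s)
    (w : ℤ → ℂ) (hw0 : w 0 = 0) (hw1 : w 1 = 1)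
    (hrec : ∀ j : ℤ, w (j + 1) = s * w j - w (j - 1)) :
    ∀ k : ℤ, ((S ^ k : SpecialLinearGroup (Fin 2) ℂ) : Matrix (Fin 2) (Fin 2) ℂ)
      = w k • (S : Matrix (Fin 2) (Fin 2) ℂ) - w (k - 1) • 1 := by
  have hdown : ∀ j : ℤ, w (j - 1) = s * w j - w (j + 1) := fun j => by
    linear_combination hrec j
  have hCH : (S : Matrix (Fin 2) (Fin 2) ℂ) * S = s • (S : Matrix (Fin 2) (Fin 2) ℂ) - 1 := by
    rw [← hs]; exact CH2' _ (by simp)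
  have hinv : ((S⁻¹ : SpecialLinearGroup (Fin 2) ℂ) : Matrix (Fin 2) (Fin 2) ℂ)
      = s • 1 - (S : Matrix (Fin 2) (Fin 2) ℂ) := by rw [inv_coe2', hs]
  intro k
  induction k using Int.induction_on with
  | zero =>
    have hm1 : w (-1) = -1 := by
      have h := hdown 0
      rw [show (0:ℤ) - 1 = -1 by ring, show (0:ℤ) + 1 = 1 by ring, hw0, hw1] at h
      simpa using h
    rw [show (0:ℤ) - 1 = -1 by ring, hm1, hw0, zpow_zero]
    simp
  | succ n ih =>
    rw [_root_.zpow_add_one, Matrix.SpecialLinearGroup.coe_mul, ih,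
      show (n:ℤ) + 1 - 1 = (n:ℤ) by ring, hrec n,
      sub_mul, smul_mul_assoc, smul_mul_assoc, one_mul, hCH]
    module
  | pred n ih =>
    rw [show -(n:ℤ) - 1 = -(n:ℤ) + -1 by ring, _root_.zpow_add, _root_.zpow_neg_one,
      Matrix.SpecialLinearGroup.coe_mul, ih, hinv,
      show -(n:ℤ) + -1 - 1 = (-(n:ℤ)-1) - 1 by ring, hdown (-(n:ℤ)-1),
      show -(n:ℤ) - 1 + 1 = -(n:ℤ) by ring,
      show -(n:ℤ) + -1 = -(n:ℤ) - 1 by ring,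
      sub_mul, smul_mul_assoc, smul_mul_assoc, one_mul, mul_sub, mul_smul_comm, mul_one, hCH]
    module

theorem sl2_trace_A (X₁ X₂ Y A : Matrix.SpecialLinearGroup (Fin 2) ℂ)
    (hY : Y = X₂ * X₁⁻¹) (t s : ℂ)
    (h1 : (X₁ : Matrix (Fin 2) (Fin 2) ℂ).trace = t)
    (h2 : (X₂ : Matrix (Fin 2) (Fin 2) ℂ).trace = t)
    (hs : (Y : Matrix (Fin 2) (Fin 2) ℂ).trace = s)
    (w : ℤ → ℂ) (hw0 : w 0 = 0) (hw1 : w 1 = 1)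
    (hrec : ∀ j : ℤ, w (j + 1) = s * w j - w (j - 1)) (k : ℤ)
    (β γ : ℂ) (hβ : β = w k) (hγ : γ = w (k + 1))
    (hA : A = Y ^ k * X₂ * Y ^ (-k) * X₁) :
    (A : Matrix (Fin 2) (Fin 2) ℂ).trace = 2 - (s + 2 - t ^ 2) * (γ - β) ^ 2 := by
  obtain ⟨⟨hn1, hn2⟩, hI⟩ := wpair' s w hw0 hw1 hrec k
  have hIk : γ^2 + β^2 - s*γ*β = 1 := by rw [hβ, hγ]; exact hI
  have hwk1 : w (k-1) = s*β - γ := by rw [hβ, hγ]; linear_combination hrec k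
  have hN : ((X₁⁻¹ : SpecialLinearGroup (Fin 2) ℂ) : Matrix (Fin 2) (Fin 2) ℂ)
      = t • 1 - X₁ := by rw [inv_coe2', h1]
  have hYM : (Y : Matrix (Fin 2) (Fin 2) ℂ)
      = (X₂ : Matrix (Fin 2) (Fin 2) ℂ) * (t • 1 - X₁) := by
    rw [hY, Matrix.SpecialLinearGroup.coe_mul, hN]
  have hP := powS' Y s hs w hw0 hw1 hrec k
  have hQ := powS' Y s hs w hw0 hw1 hrec (-k)
  rw [show -k - 1 = -(k+1) by ring, hn1, hn2, ← hβ, ← hγ] at hQ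
  rw [hwk1, ← hβ] at hP
  have hsE : ((X₂ : Matrix (Fin 2) (Fin 2) ℂ) * (t • 1 - X₁)).trace = s := by
    rw [← hYM]; exact hs
  have hdet1 : (X₁ : Matrix (Fin 2) (Fin 2) ℂ).det = 1 := by simp
  have hdet2 : (X₂ : Matrix (Fin 2) (Fin 2) ℂ).det = 1 := by simp
  rw [hA, Matrix.SpecialLinearGroup.coe_mul, Matrix.SpecialLinearGroup.coe_mul,
    Matrix.SpecialLinearGroup.coe_mul, hP, hQ, hYM]
  rw [Matrix.det_fin_two] at hdet1 hdet2
  rw [Matrix.trace_fin_two] at h1 h2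
  rw [Matrix.trace_fin_two] at hsE
  simp only [Matrix.trace_fin_two, Matrix.mul_apply, Fin.sum_univ_two, Matrix.sub_apply,
    Matrix.smul_apply, Matrix.one_apply, Matrix.mul_apply, smul_eq_mul] at hsE ⊢
  norm_num at hsE ⊢
  set a := (X₁ : Matrix (Fin 2) (Fin 2) ℂ) 0 0 with ha
  set b := (X₁ : Matrix (Fin 2) (Fin 2) ℂ) 0 1 with hb
  set c := (X₁ : Matrix (Fin 2) (Fin 2) ℂ) 1 0 with hc
  set d := (X₁ : Matrix (Fin 2) (Fin 2) ℂ) 1 1 with hd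
  set e := (X₂ : Matrix (Fin 2) (Fin 2) ℂ) 0 0 with he
  set f := (X₂ : Matrix (Fin 2) (Fin 2) ℂ) 0 1 with hf
  set g := (X₂ : Matrix (Fin 2) (Fin 2) ℂ) 1 0 with hg
  set h := (X₂ : Matrix (Fin 2) (Fin 2) ℂ) 1 1 with hh
  linear_combination
    ((-1:ℂ)*γ^2 + (-1:ℂ)*β^2 + d*h*β*γ + d^2*h^2*β^2 + d^2*f*g*β^2 + c*f*β*γ + c*d*f*h*β^2 + c*d*e*f*β^2 + b*g*β*γ + b*d*g*h*β^2 + b*d*e*g*β^2 + b*c*h^2*β^2 + (2:ℂ)*b*c*f*g*β^2 + b*c*e^2*β^2 + a*e*β*γ + a*c*f*h*β^2 + a*c*e*f*β^2 + a*b*g*h*β^2 + a*b*e*g*β^2 + a^2*f*g*β^2 + a^2*e^2*β^2 + (-1:ℂ)*t*d*h^2*β^2 + (-1:ℂ)*t*d*f*g*β^2 + (-1:ℂ)*t*c*f*h*β^2 + (-1:ℂ)*t*c*e*f*β^2 + (-1:ℂ)*t*b*g*h*β^2 + (-1:ℂ)*t*b*e*g*β^2 + (-1:ℂ)*t*a*f*g*β^2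 + (-1:ℂ)*t*a*e^2*β^2) * hsE +
    ((-1:ℂ)*h*γ^2 + (2:ℂ)*h*β*γ + (-1:ℂ)*e*γ^2 + (-1:ℂ)*e*β^2 + (-2:ℂ)*d*β*γ + d*h^2*β*γ + d*h^2*β^2 + d*e*h*β*γ + c*f*h*β*γ + c*f*h*β^2 + c*e*f*β*γ + b*g*h*β*γ + b*g*h*β^2 + b*e*g*β*γ + b*c*h*β*γ + b*c*h*β^2 + (-1:ℂ)*b*c*e*β*γ + (-1:ℂ)*b*c*d*β*γ + b*c*d*h^2*β^2 + b*c^2*f*h*β^2 + b^2*c*g*h*β^2 + (-2:ℂ)*a*β*γ + a*β^2 + (-1:ℂ)*a*h^2*β^2 + a*e*h*β*γ + a*e^2*β*γ + (-1:ℂ)*a*d*h*β*γ + a*d*e*β*γ + a*d^2*β*γ + (-1:ℂ)*a*d^2*h^2*β^2 + (-1:ℂ)*a*c*d*f*h*β^2 + (-1:ℂ)*a*b*d*g*h*β^2 + (-1:ℂ)*a*b*c*β*γ + (-1:ℂ)*a*b*c*h^2*β^2 + (-1:ℂ)*a*b*c*f*g*β^2 + a*b*c*e*h*β^2 + a*b*c*d*h*β^2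 + a^2*h*β^2 + a^2*d*β*γ + a^2*d*h^2*β^2 + a^2*d*f*g*β^2 + (-1:ℂ)*a^2*d*e*h*β^2 + (-1:ℂ)*a^2*d^2*h*β^2 + a^2*b*c*h*β^2 + (-1:ℂ)*a^3*d*h*β^2 + t*γ^2 + (-2:ℂ)*t*β*γ + t*β^2 + t*d*f*g*h*β^2 + (-1:ℂ)*t*d*e*h^2*β^2 + t*c*f^2*g*β^2 + (-1:ℂ)*t*c*e*f*h*β^2 + t*b*f*g^2*β^2 + (-1:ℂ)*t*b*e*g*h*β^2 + t*a*e*f*g*β^2 + (-1:ℂ)*t*a*e^2*h*β^2) * h1 +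
    ((-2:ℂ)*h*β*γ + (-1:ℂ)*h*β^2 + d*γ^2 + d*β^2 + (-1:ℂ)*d*h^2*β^2 + (-1:ℂ)*c*f*h*β^2 + (-1:ℂ)*b*g*h*β^2 + (-1:ℂ)*b*c*h*β*γ + (-1:ℂ)*b*c*h*β^2 + b*c*e*β*γ + b*c*d*β*γ + (-1:ℂ)*b*c*d*h^2*β^2 + (-1:ℂ)*b*c^2*f*h*β^2 + (-1:ℂ)*b^2*c*g*h*β^2 + a*γ^2 + a*h^2*β^2 + a*d*h*β*γ + (-1:ℂ)*a*d*e*β*γ + (-1:ℂ)*a*d^2*β*γ + a*d^2*h^2*β^2 + a*c*d*f*h*β^2 + a*b*d*g*h*β^2 + a*b*c*β*γ + a*b*c*h^2*β^2 + a*b*c*f*g*β^2 + (-1:ℂ)*a*b*c*e*h*β^2 + (-1:ℂ)*a*b*c*d*h*β^2 + (-1:ℂ)*a^2*h*β^2 + (-1:ℂ)*a^2*d*β*γ + (-1:ℂ)*a^2*d*h^2*β^2 + (-1:ℂ)*a^2*d*f*g*β^2 + a^2*d*e*h*β^2 + a^2*d^2*h*β^2 + (-1:ℂ)*a^2*b*c*h*β^2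 + a^3*d*h*β^2) * h2 +
    ((2:ℂ)) * hIk +
    ((2:ℂ)*β*γ + (-1:ℂ)*β^2 + (-2:ℂ)*h^2*β*γ + (-1:ℂ)*h^2*β^2 + (-2:ℂ)*f*g*β*γ + (-1:ℂ)*f*g*β^2 + (2:ℂ)*d*h*β*γ + d*h*β^2 + (-1:ℂ)*d*h^3*β^2 + (-1:ℂ)*d*f*g*h*β^2 + (-1:ℂ)*d^2*β*γ + d^2*h^2*β^2 + (-1:ℂ)*c*f*h^2*β^2 + (-1:ℂ)*c*f^2*g*β^2 + c*d*f*h*β^2 + (-1:ℂ)*b*g*h^2*β^2 + (-1:ℂ)*b*f*g^2*β^2 + b*d*g*h*β^2 + (2:ℂ)*a*h*β*γ + a*h*β^2 + a*h^3*β^2 + a*f*g*h*β^2 + (-2:ℂ)*a*d*β*γ + (-1:ℂ)*a*d*h^2*β^2 + (-1:ℂ)*a*d*f*g*β^2 + a*d^2*h*β^2 + a*c*f*h*β^2 + a*b*g*h*β^2 + (-1:ℂ)*a^2*β*γ + (-2:ℂ)*a^2*h^2*β^2 + (-1:ℂ)*a^2*f*g*β^2 + (2:ℂ)*a^2*d*h*β^2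 + a^3*h*β^2) * hdet1 +
    ((2:ℂ)*β*γ + β^2 + d*h*β^2 + (-1:ℂ)*d^2*β*γ + c*f*β^2 + b*g*β^2 + (-2:ℂ)*b*c*β*γ + b*c*β^2 + (-1:ℂ)*a*h*β^2 + (-1:ℂ)*a^2*β*γ + a^2*β^2) * hdet2
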